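/- Let λ, μ be partitions with ℓ = ℓ(λ). Then for all u ∈ ℂ: N_{μ,λ}(u) = N_{μ,λ̄}(q^{-1}u) · ∏_{j=1}^{μ_{ℓ+1}} (1 − q^{j−1}u)/(1 − q^{−ℓ_μ(ℓ+1,j)+j−2}u) · ∏_{i=1}^{ℓ}(1 − q^{ℓ−i+a_μ(i,1)+1}u), interpreted as a polynomial identity after clearing denominators. -/

import Mathlib

open Finset

noncomputable section

/-- The `i`-th part (0-indexed) of a partition given as a list of parts. -/
def part (l : List ℕ) (i : ℕ) : ℕ := l.getD i 0

/-- The `j`-th column length (0-indexed), i.e. λ'_{j+1} = #{i : λ_i ≥ j+1}. -/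
def conjPart (l : List ℕ) (j : ℕ) : ℕ := (l.filter (fun p => j < p)).length

/-- A list of naturals represents a partition: weakly decreasing with positive parts. -/
def IsPartition (l : List ℕ) : Prop := l.Pairwise (· ≥ ·) ∧ ∀ p ∈ l, 0 < p

/-- The Nekrasov factor N_{λ,μ}(u) =
  ∏_{(i,j)∈λ}(1 - q^{-ℓ_λ(i,j)-a_μ(i,j)-1} u) · ∏_{(i,j)∈μ}(1 - q^{ℓ_μ(i,j)+a_λ(i,j)+1} u),
  with cells 0-indexed: arm a_μ(i,j) = μ_{i+1} - (j+1), leg ℓ_λ(i,j) = λ'_{j+1} - (i+1). -/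
def nek (q u : ℂ) (lam mu : List ℕ) : ℂ :=
  (∏ i ∈ Finset.range lam.length, ∏ j ∈ Finset.range (part lam i),
    (1 - q ^ (-((conjPart lam j : ℤ) - ((i : ℤ) + 1)) - ((part mu i : ℤ) - ((j : ℤ) + 1)) - 1) * u)) *
  (∏ i ∈ Finset.range mu.length, ∏ j ∈ Finset.range (part mu i),
    (1 - q ^ (((conjPart mu j : ℤ) - ((i : ℤ) + 1)) + ((part lam i : ℤ) - ((j : ℤ) + 1)) + 1) * u))

/-- λ̄ : all parts decreased by 1, zero parts dropped. -/
def bar (l : List ℕ) : List ℕ := (l.map (fun p => p - 1)).filter (fun p => 0 < p)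

/-- r_n(λ) = (λ_1+1, …, λ_n+1, λ_{n+2}, λ_{n+3}, …). -/
def rn (n : ℕ) (l : List ℕ) : List ℕ :=
  ((List.range n).map (fun i => part l i + 1)) ++ l.drop (n + 1)

/-- The conjugate (transposed) partition as a list. -/
def conjList (l : List ℕ) : List ℕ :=
  (List.range (part l 0)).map (fun j => conjPart l j)

end

lemma conjPart_cons (a : ℕ) (t : List ℕ) (j : ℕ) :
    conjPart (a :: t) j = (if j < a then 1 else 0) + conjPart t j := by
  simp only [conjPart, List.filter_cons]
  by_cases h : j < a <;> simp [h] <;> omega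

lemma conjPart_eq_zero (t : List ℕ) (j : ℕ) (h : ∀ x ∈ t, x ≤ j) : conjPart t j = 0 := by
  simp only [conjPart, List.length_eq_zero_iff, List.filter_eq_nil_iff, decide_eq_true_eq]
  intro a ha
  have := h a ha
  omega

lemma part_le (t : List ℕ) (a i : ℕ) (h : ∀ x ∈ t, x ≤ a) : part t i ≤ a := by
  unfold part
  rcases lt_or_ge i t.length with hi | hi
  · rw [List.getD_eq_getElem _ _ hi]; exact h _ (List.getElem_mem ..)
  · rw [List.getD_eq_default _ _ hi]; exact Nat.zero_le a

lemma part_cons_succ (a : ℕ) (t : List ℕ) (i : ℕ) : part (a :: t) (i+1) = part t i := by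
  simp [part]

lemma part_cons_zero (a : ℕ) (t : List ℕ) : part (a :: t) 0 = a := rfl

lemma conj_lt_iff : ∀ (l : List ℕ), l.Pairwise (· ≥ ·) → ∀ i j : ℕ, (j < part l i ↔ i < conjPart l j)
  | [], _, i, j => by simp [part, conjPart]
  | a :: t, h, i, j => by
    have h1 : ∀ x ∈ t, x ≤ a := fun x hx => (List.pairwise_cons.mp h).1 x hx
    have h2 : t.Pairwise (· ≥ ·) := (List.pairwise_cons.mp h).2
    rw [conjPart_cons]
    cases i with
    | zero =>
      rw [part_cons_zero]
      by_cases hja : j < a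
      · simp [hja]
      · have h0 : conjPart t j = 0 := conjPart_eq_zero t j (fun x hx => le_trans (h1 x hx) (by omega))
        simp [hja, h0]
    | succ n =>
      rw [part_cons_succ]
      have IH := conj_lt_iff t h2 n j
      by_cases hja : j < a
      · rw [if_pos hja]; omega
      · have h0 : conjPart t j = 0 := conjPart_eq_zero t j (fun x hx => le_trans (h1 x hx) (by omega))
        have h3 : part t n ≤ a := part_le t a n h1
        rw [if_neg hja]; omega

lemma part_antitone (l : List ℕ) (hl : l.Pairwise (· ≥ ·)) {i i' : ℕ} (h : i ≤ i') :
    part l i' ≤ part l i := by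
  by_contra hc
  push_neg at hc
  have h1 := (conj_lt_iff l hl i' (part l i)).mp hc
  have h2 := (conj_lt_iff l hl i (part l i)).mpr (by omega)
  omega

lemma conjPart_le_length (l : List ℕ) (j : ℕ) : conjPart l j ≤ l.length :=
  List.length_filter_le _ _

lemma conjPart_zero (l : List ℕ) (hpos : ∀ p ∈ l, 0 < p) : conjPart l 0 = l.length := by
  unfold conjPart
  rw [List.filter_eq_self.mpr]
  intro a ha
  simpa using hpos a ha

lemma part_eq_zero {l : List ℕ} {i : ℕ} (h : l.length ≤ i) : part l i = 0 :=
  List.getD_eq_default _ _ h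

lemma bar_cons (a : ℕ) (t : List ℕ) :
    bar (a :: t) = if 1 < a then (a-1) :: bar t else bar t := by
  simp only [bar, List.map_cons, List.filter_cons, decide_eq_true_eq]
  by_cases h : 1 < a
  · rw [if_pos (by omega), if_pos h]
  · rw [if_neg (by omega), if_neg h]

lemma part_bar : ∀ (l : List ℕ), l.Pairwise (· ≥ ·) → ∀ i, part (bar l) i = part l i - 1
  | [], _, i => by simp [bar, part]
  | a :: t, h, i => by
    have h1 : ∀ x ∈ t, x ≤ a := fun x hx => (List.pairwise_cons.mp h).1 x hx
    have h2 : t.Pairwise (· ≥ ·) := (List.pairwise_cons.mp h).2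
    rw [bar_cons]
    by_cases ha : 1 < a
    · rw [if_pos ha]
      cases i with
      | zero => rw [part_cons_zero, part_cons_zero]
      | succ n => rw [part_cons_succ, part_cons_succ]; exact part_bar t h2 n
    · rw [if_neg ha]
      have hbt : bar t = [] := by
        unfold bar
        rw [List.filter_eq_nil_iff]
        intro x hx
        simp only [List.mem_map] at hx
        obtain ⟨y, hy, rfl⟩ := hx
        have := h1 y hy
        simp only [decide_eq_true_eq]
        omega
      rw [hbt]
      have hle : part (a :: t) i ≤ a := part_le _ _ _ (by
        intro x hx
        rcases List.mem_cons.mp hx with rfl | hx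
        · exact le_rfl
        · exact h1 x hx)
      have : part ([] : List ℕ) i = 0 := by simp [part]
      omega

lemma conjPart_bar : ∀ (l : List ℕ) (j : ℕ), conjPart (bar l) j = conjPart l (j+1)
  | [], j => rfl
  | a :: t, j => by
    rw [bar_cons, conjPart_cons]
    by_cases ha : 1 < a
    · rw [if_pos ha, conjPart_cons, conjPart_bar t j]
      by_cases hj : j + 1 < a
      · rw [if_pos (by omega), if_pos hj]
      · rw [if_neg (by omega), if_neg hj]
    · rw [if_neg ha, conjPart_bar t j, if_neg (by omega), zero_add]

lemma bar_length (l : List ℕ) : (bar l).length = conjPart l 1 := by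
  rw [← conjPart_bar l 0]
  exact (conjPart_zero (bar l) (fun p hp => by
    have := List.mem_filter.mp hp
    simpa using this.2)).symm

lemma bar_length_le (l : List ℕ) : (bar l).length ≤ l.length :=
  le_trans (List.length_filter_le _ _) (by rw [List.length_map])

lemma prod_shift (s : ℕ → ℂ) {L K : ℕ} (h : L ≤ K) :
    (∏ i ∈ Finset.Ico L K, s (i+1)) * s L = (∏ i ∈ Finset.Ico L K, s i) * s K := by
  induction K, h using Nat.le_induction with
  | base => simp
  | succ n hn ih =>
    rw [Finset.prod_Ico_succ_top (by omega), Finset.prod_Ico_succ_top hn]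
    linear_combination s (n+1) * ih

lemma factor_congr (q u : ℂ) {e e' : ℤ} (h : e = e') : 1 - q ^ e * u = 1 - q ^ e' * u := by rw [h]

lemma qpow_shift {q : ℂ} (hq : q ≠ 0) (u : ℂ) (e : ℤ) : 1 - q ^ e * (q⁻¹ * u) = 1 - q ^ (e-1) * u := by
  rw [zpow_sub₀ hq, zpow_one]
  ring

-- part of a partition is positive below the length
lemma part_pos (l : List ℕ) (hl : IsPartition l) {i : ℕ} (h : i < l.length) : 0 < part l i :=
  (conj_lt_iff l hl.1 i 0).mpr (by rw [conjPart_zero l hl.2]; exact h)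

/-- B-step: split off the first column of the second product of `nek q u mu lam`. -/
lemma Bstep (q u : ℂ) (lam mu : List ℕ) (hlam : IsPartition lam) :
    (∏ i ∈ Finset.range lam.length, ∏ j ∈ Finset.range (part lam i),
      (1 - q ^ (((conjPart lam j : ℤ) - ((i : ℤ) + 1)) + ((part mu i : ℤ) - ((j : ℤ) + 1)) + 1) * u))
    = (∏ i ∈ Finset.range lam.length, ∏ j ∈ Finset.range (part lam i - 1),
        (1 - q ^ ((conjPart lam (j+1) : ℤ) + (part mu i : ℤ) - (i : ℤ) - (j : ℤ) - 2) * u))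
      * ∏ i ∈ Finset.range lam.length,
          (1 - q ^ ((lam.length : ℤ) - (i : ℤ) - 1 + (part mu i : ℤ)) * u) := by
  rw [← Finset.prod_mul_distrib]
  apply Finset.prod_congr rfl
  intro i hi
  rw [Finset.mem_range] at hi
  have h1 : 0 < part lam i := part_pos lam hlam hi
  obtain ⟨n, hn⟩ : ∃ n, part lam i = n + 1 := ⟨part lam i - 1, by omega⟩
  rw [hn, Finset.prod_range_succ']
  have hL : conjPart lam 0 = lam.length := conjPart_zero lam hlam.2
  congr 1
  · apply Finset.prod_congr (by norm_num)
    intro j _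
    exact factor_congr q u (by push_cast; ring)
  · exact factor_congr q u (by rw [hL]; push_cast; ring)

/-- B-step 2: the second product of `nek q (q⁻¹ u) mu (bar lam)` equals the intermediate form. -/
lemma Bstep2 (q : ℂ) (hq : q ≠ 0) (u : ℂ) (lam mu : List ℕ) (hlam : IsPartition lam) :
    (∏ i ∈ Finset.range (bar lam).length, ∏ j ∈ Finset.range (part (bar lam) i),
      (1 - q ^ (((conjPart (bar lam) j : ℤ) - ((i : ℤ) + 1)) + ((part mu i : ℤ) - ((j : ℤ) + 1)) + 1) * (q⁻¹ * u)))
    = ∏ i ∈ Finset.range lam.length, ∏ j ∈ Finset.range (part lam i - 1),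
        (1 - q ^ ((conjPart lam (j+1) : ℤ) + (part mu i : ℤ) - (i : ℤ) - (j : ℤ) - 2) * u) := by
  have step1 : ∀ i : ℕ, (∏ j ∈ Finset.range (part (bar lam) i),
      (1 - q ^ (((conjPart (bar lam) j : ℤ) - ((i : ℤ) + 1)) + ((part mu i : ℤ) - ((j : ℤ) + 1)) + 1) * (q⁻¹ * u)))
      = ∏ j ∈ Finset.range (part lam i - 1),
        (1 - q ^ ((conjPart lam (j+1) : ℤ) + (part mu i : ℤ) - (i : ℤ) - (j : ℤ) - 2) * u) := by
    intro i
    apply Finset.prod_congr (by rw [part_bar lam hlam.1])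
    intro j _
    rw [qpow_shift hq]
    exact factor_congr q u (by rw [conjPart_bar lam j]; push_cast; ring)
  have hmL : (bar lam).length ≤ lam.length := bar_length_le lam
  rw [← Finset.prod_range_mul_prod_Ico _ hmL]
  have hIco : (∏ i ∈ Finset.Ico (bar lam).length lam.length,
      ∏ j ∈ Finset.range (part lam i - 1),
        (1 - q ^ ((conjPart lam (j+1) : ℤ) + (part mu i : ℤ) - (i : ℤ) - (j : ℤ) - 2) * u)) = 1 := by
    apply Finset.prod_eq_one
    intro i hi
    rw [Finset.mem_Ico] at hi
    have : part lam i - 1 = 0 := by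
      have h2 : ¬ (1 < part lam i) := by
        rw [conj_lt_iff lam hlam.1 i 1, ← bar_length lam]
        omega
      omega
    rw [this]
    simp
  rw [hIco, mul_one]
  apply Finset.prod_congr rfl
  intro i _
  exact step1 i

/-- A-step: relating the first products plus the boundary column factors. -/
lemma Astep (q : ℂ) (hq : q ≠ 0) (u : ℂ) (lam mu : List ℕ)
    (hlam : IsPartition lam) (hmu : IsPartition mu) :
    (∏ i ∈ Finset.range mu.length, ∏ j ∈ Finset.range (part mu i),
        (1 - q ^ (-((conjPart mu j : ℤ) - ((i : ℤ) + 1)) - ((part lam i : ℤ) - ((j : ℤ) + 1)) - 1) * u))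
      * (∏ j ∈ Finset.range (part mu lam.length),
          (1 - q ^ (-(conjPart mu j : ℤ) + (lam.length : ℤ) + (j : ℤ)) * u))
    = (∏ i ∈ Finset.range mu.length, ∏ j ∈ Finset.range (part mu i),
        (1 - q ^ (-((conjPart mu j : ℤ) - ((i : ℤ) + 1)) - ((part (bar lam) i : ℤ) - ((j : ℤ) + 1)) - 1) * (q⁻¹ * u)))
      * (∏ j ∈ Finset.range (part mu lam.length), (1 - q ^ (j : ℤ) * u)) := by
  set L := lam.length with hL
  set M := mu.length with hM
  -- per-row equality for rows below L
  have hrow : ∀ i : ℕ, i < L →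
      (∏ j ∈ Finset.range (part mu i),
        (1 - q ^ (-((conjPart mu j : ℤ) - ((i : ℤ) + 1)) - ((part lam i : ℤ) - ((j : ℤ) + 1)) - 1) * u))
      = ∏ j ∈ Finset.range (part mu i),
        (1 - q ^ (-((conjPart mu j : ℤ) - ((i : ℤ) + 1)) - ((part (bar lam) i : ℤ) - ((j : ℤ) + 1)) - 1) * (q⁻¹ * u)) := by
    intro i hi
    apply Finset.prod_congr rfl
    intro j _
    rw [qpow_shift hq]
    apply factor_congr
    have h1 : 0 < part lam i := part_pos lam hlam hi
    have h2 : part (bar lam) i = part lam i - 1 := part_bar lam hlam.1 i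
    omega
  rcases le_or_gt M L with hML | hML
  · -- easy case: mu has at most L rows, boundary products are empty
    have hP : part mu L = 0 := part_eq_zero (by omega)
    rw [hP]
    simp only [Finset.range_zero, Finset.prod_empty, mul_one]
    exact Finset.prod_congr rfl (fun i hi => hrow i (lt_of_lt_of_le (Finset.mem_range.mp hi) hML))
  · -- hard case: rows L..M-1 of mu exist
    rw [← Finset.prod_range_mul_prod_Ico _ (le_of_lt hML),
        ← Finset.prod_range_mul_prod_Ico
          (fun i => ∏ j ∈ Finset.range (part mu i),
            (1 - q ^ (-((conjPart mu j : ℤ) - ((i : ℤ) + 1)) - ((part (bar lam) i : ℤ) - ((j : ℤ) + 1)) - 1) * (q⁻¹ * u)))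
          (le_of_lt hML)]
    have hhead : (∏ i ∈ Finset.range L, ∏ j ∈ Finset.range (part mu i),
        (1 - q ^ (-((conjPart mu j : ℤ) - ((i : ℤ) + 1)) - ((part lam i : ℤ) - ((j : ℤ) + 1)) - 1) * u))
      = ∏ i ∈ Finset.range L, ∏ j ∈ Finset.range (part mu i),
        (1 - q ^ (-((conjPart mu j : ℤ) - ((i : ℤ) + 1)) - ((part (bar lam) i : ℤ) - ((j : ℤ) + 1)) - 1) * (q⁻¹ * u)) :=
      Finset.prod_congr rfl (fun i hi => hrow i (Finset.mem_range.mp hi))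
    rw [hhead]
    -- now reduce to the tail statement
    rw [mul_assoc, mul_assoc]
    congr 1
    -- tail * E1 = tail' * E0
    set P := part mu L with hPdef
    set s : ℕ → ℕ → ℂ := fun j t => 1 - q ^ ((t : ℤ) + (j : ℤ) - (conjPart mu j : ℤ)) * u with hs
    have tail1 : (∏ i ∈ Finset.Ico L M, ∏ j ∈ Finset.range (part mu i),
        (1 - q ^ (-((conjPart mu j : ℤ) - ((i : ℤ) + 1)) - ((part lam i : ℤ) - ((j : ℤ) + 1)) - 1) * u))
        = ∏ j ∈ Finset.range P, ∏ i ∈ Finset.Ico L M, (if j < part mu i then s j (i+1) else 1) := by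
      rw [Finset.prod_comm]
      apply Finset.prod_congr rfl
      intro i hi
      rw [Finset.mem_Ico] at hi
      have hle : part mu i ≤ P := part_antitone mu hmu.1 hi.1
      have hrange : Finset.range (part mu i) = (Finset.range P).filter (· < part mu i) := by
        ext x; simp; omega
      rw [hrange, Finset.prod_filter]
      apply Finset.prod_congr rfl
      intro j _
      by_cases hj : j < part mu i
      · rw [if_pos hj, if_pos hj]
        apply factor_congr
        have h0 : part lam i = 0 := part_eq_zero (by omega)
        omega
      · rw [if_neg hj, if_neg hj]
    have tail2 : (∏ i ∈ Finset.Ico L M, ∏ j ∈ Finset.range (part mu i),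
        (1 - q ^ (-((conjPart mu j : ℤ) - ((i : ℤ) + 1)) - ((part (bar lam) i : ℤ) - ((j : ℤ) + 1)) - 1) * (q⁻¹ * u)))
        = ∏ j ∈ Finset.range P, ∏ i ∈ Finset.Ico L M, (if j < part mu i then s j i else 1) := by
      rw [Finset.prod_comm]
      apply Finset.prod_congr rfl
      intro i hi
      rw [Finset.mem_Ico] at hi
      have hle : part mu i ≤ P := part_antitone mu hmu.1 hi.1
      have hrange : Finset.range (part mu i) = (Finset.range P).filter (· < part mu i) := by
        ext x; simp; omega
      rw [hrange, Finset.prod_filter]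
      apply Finset.prod_congr rfl
      intro j _
      by_cases hj : j < part mu i
      · rw [if_pos hj, if_pos hj, qpow_shift hq]
        apply factor_congr
        have h0 : part (bar lam) i = 0 := part_eq_zero (le_trans (bar_length_le lam) (by omega))
        omega
      · rw [if_neg hj, if_neg hj]
    have hE1 : (∏ j ∈ Finset.range P,
        (1 - q ^ (-(conjPart mu j : ℤ) + (L : ℤ) + (j : ℤ)) * u)) = ∏ j ∈ Finset.range P, s j L :=
      Finset.prod_congr rfl (fun j _ => factor_congr q u (by omega))
    have hE0 : (∏ j ∈ Finset.range P, (1 - q ^ (j : ℤ) * u))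
        = ∏ j ∈ Finset.range P, s j (conjPart mu j) :=
      Finset.prod_congr rfl (fun j _ => factor_congr q u (by omega))
    rw [tail1, tail2, hE1, hE0, ← Finset.prod_mul_distrib, ← Finset.prod_mul_distrib]
    apply Finset.prod_congr rfl
    intro j hj
    rw [Finset.mem_range] at hj
    set K := conjPart mu j with hK
    have hLK : L < K := (conj_lt_iff mu hmu.1 L j).mp hj
    have hKM : K ≤ M := conjPart_le_length mu j
    have hcol : ∀ t : ℕ → ℂ, (∏ i ∈ Finset.Ico L M, (if j < part mu i then t i else 1))
        = ∏ i ∈ Finset.Ico L K, t i := by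
      intro t
      have h1 : ∀ i ∈ Finset.Ico L M, (if j < part mu i then t i else 1) = (if i < K then t i else 1) := by
        intro i _
        by_cases hc : j < part mu i
        · rw [if_pos hc, if_pos ((conj_lt_iff mu hmu.1 i j).mp hc)]
        · rw [if_neg hc, if_neg (fun hc' => hc ((conj_lt_iff mu hmu.1 i j).mpr hc'))]
      rw [Finset.prod_congr rfl h1, ← Finset.prod_filter]
      congr 1
      ext x; simp [Finset.mem_Ico]; omega
    rw [hcol, hcol]
    exact prod_shift (s j) (le_of_lt hLK)

theorem stmt19 (q : ℂ) (hq : q ≠ 0)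
    (lam mu : List ℕ) (hlam : IsPartition lam) (hmu : IsPartition mu) (u : ℂ) :
    let L := lam.length
    nek q u mu lam *
        (∏ j ∈ Finset.range (part mu L), (1 - q ^ (-(conjPart mu j : ℤ) + (L : ℤ) + (j : ℤ)) * u)) =
      nek q (q⁻¹ * u) mu (bar lam) *
        (∏ j ∈ Finset.range (part mu L), (1 - q ^ (j : ℤ) * u)) *
        (∏ i ∈ Finset.range L, (1 - q ^ ((L : ℤ) - (i : ℤ) - 1 + (part mu i : ℤ)) * u)) := by
  intro L
  rw [show L = lam.length from rfl]
  simp only [nek]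
  have hA := Astep q hq u lam mu hlam hmu
  have hB := Bstep q u lam mu hlam
  have hB2 := Bstep2 q hq u lam mu hlam
  have alg : ∀ a e1 a' e0 b b' x y : ℂ, a * e1 = a' * e0 → b = x * y → b' = x →
      a * b * e1 = a' * b' * e0 * y := by
    intro a e1 a' e0 b b' x y h1 h2 h3
    rw [h2, h3]
    linear_combination x * y * h1
  exact alg _ _ _ _ _ _ _ _ hA hB hB2
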